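/- arXiv:1810.07453 — 3 statements merged into one kernel-verified Lean document; each statement's English description precedes it below -/
import Mathlib

section
/- Let (X,T) be a minimal topological dynamical system with X compact. If f ∈ C(X,ℤ) (an integer-valued continuous function) is the coboundary of some real-valued continuous function g ∈ C(X,ℝ), then f is also the coboundary of some integer-valued continuous function h ∈ C(X,ℤ). -/
open Filter Topology MeasureTheory

namespace Balance

variable {A : Type*}

/-- number of (possibly overlapping) occurrences of `v` as a factor of `w` -/
def occ [DecidableEq A] (v w : List A) : ℕ :=
  ((List.range (w.length + 1)).filter (fun i => v <+: w.drop i)).length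

/-- the factor of the bi-infinite word `u` starting at position `i`, of length `n` -/
def factorAt (u : ℤ → A) (i : ℤ) (n : ℕ) : List A :=
  (List.range n).map (fun k => u (i + k))

/-- `w` is a factor of the bi-infinite word `u` -/
def IsFactor (u : ℤ → A) (w : List A) : Prop :=
  ∃ i : ℤ, w = factorAt u i w.length

/-- the bi-infinite word `u` is balanced on the word `v` -/
def BalancedOn [DecidableEq A] (u : ℤ → A) (v : List A) : Prop :=
  ∃ C : ℕ, ∀ w w' : List A, IsFactor u w → IsFactor u w' → w.length = w'.length →
    ((occ v w : ℤ) - (occ v w' : ℤ)).natAbs ≤ C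

/-- the shift map on bi-infinite words -/
def shift (x : ℤ → A) : ℤ → A := fun n => x (n + 1)

/-- cylinder of points spelling `v` at coordinates `0,…,|v|-1` -/
def Cyl (v : List A) : Set (ℤ → A) := {x | factorAt x 0 v.length = v}

/-- the language of a set of bi-infinite words -/
def Lang (X : Set (ℤ → A)) : Set (List A) := {w | ∃ x ∈ X, IsFactor x w}

/-- a subshift is balanced on the word `v` -/
def SubshiftBalancedOn [DecidableEq A] (X : Set (ℤ → A)) (v : List A) : Prop :=
  ∃ C : ℕ, ∀ w w' : List A, w ∈ Lang X → w' ∈ Lang X → w.length = w'.length →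
    ((occ v w : ℤ) - (occ v w' : ℤ)).natAbs ≤ C

/-- a subshift: a nonempty closed shift-invariant set of bi-infinite words -/
structure IsSubshift [TopologicalSpace A] (X : Set (ℤ → A)) : Prop where
  nonempty : X.Nonempty
  closed : IsClosed X
  inv : shift '' X = X

/-- a minimal subshift -/
def IsMinimalSubshift [TopologicalSpace A] (X : Set (ℤ → A)) : Prop :=
  IsSubshift X ∧
    ∀ Y : Set (ℤ → A), Y ⊆ X → IsClosed Y → shift '' Y = Y → Y.Nonempty → Y = X

/-- a substitution applied to a finite word -/
def substW (σ : A → List A) (w : List A) : List A := w.flatMap σ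

/-- iterates `σ^n` applied to a finite word -/
def substIter (σ : A → List A) (n : ℕ) (w : List A) : List A := (substW σ)^[n] w

/-- a primitive (non-erasing) substitution -/
def IsPrimitive (σ : A → List A) : Prop :=
  (∀ a, σ a ≠ []) ∧ ∃ n : ℕ, ∀ a b : A, a ∈ substIter σ n [b]

/-- the subshift generated by the substitution `σ` -/
def Xsub (σ : A → List A) : Set (ℤ → A) :=
  {x | ∀ w : List A, IsFactor x w → ∃ (a : A) (n : ℕ), w <:+: substIter σ n [a]}

/-- a substitution applied to a bi-infinite word (the image of position 0 starts at 0) -/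
def substPoint [Inhabited A] (σ : A → List A) (x : ℤ → A) : ℤ → A := fun n =>
  if 0 ≤ n then
    (substW σ ((List.range (n.toNat + 1)).map (fun i => x (i : ℤ)))).getD n.toNat default
  else
    (((List.range ((-n - 1).toNat + 1)).map (fun i => x (-(i : ℤ) - 1))).flatMap
      (fun a => (σ a).reverse)).getD (-n - 1).toNat default

end Balance

namespace Balance

/-- If an integer-valued continuous function on a compact minimal system is a real
continuous coboundary, then it is an integer continuous coboundary. -/
theorem integer_coboundary {X : Type*} [TopologicalSpace X] [CompactSpace X] (T : X ≃ₜ X)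
    (hmin : ∀ Y : Set X, IsClosed Y → (fun x => T x) '' Y = Y → Y.Nonempty → Y = Set.univ)
    (f : C(X, ℤ))
    (hg : ∃ g : C(X, ℝ), ∀ x : X, (f x : ℝ) = g (T x) - g x) :
    ∃ h : C(X, ℤ), ∀ x : X, f x = h (T x) - h x := by
  obtain ⟨g, hgf⟩ := hg
  rcases isEmpty_or_nonempty X with hX | ⟨⟨x₀⟩⟩
  · exact ⟨0, fun x => (IsEmpty.false x).elim⟩
  set Y : Set X := {x | ∃ n : ℤ, g x - g x₀ = n} with hYdef
  have hYclosed : IsClosed Y := by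
    have : Y = (fun x => g x - g x₀) ⁻¹' (Set.range (Int.cast : ℤ → ℝ)) := by
      ext x; simp [hYdef, eq_comm]
    rw [this]
    exact (Int.isClosedEmbedding_coe_real.isClosed_range).preimage
      (g.continuous.sub continuous_const)
  have hYinv : (fun x => T x) '' Y = Y := by
    ext x
    constructor
    · rintro ⟨y, ⟨n, hn⟩, rfl⟩
      refine ⟨n + f y, ?_⟩
      have := hgf y
      push_cast
      linarith
    · rintro ⟨n, hn⟩
      refine ⟨T.symm x, ⟨n - f (T.symm x), ?_⟩, T.apply_symm_apply x⟩
      have := hgf (T.symm x)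
      rw [T.apply_symm_apply] at this
      push_cast
      linarith
  have hY : Y = Set.univ := hmin Y hYclosed hYinv ⟨x₀, 0, by simp⟩
  have key : ∀ x : X, ∃ n : ℤ, g x - g x₀ = n := by
    intro x
    have : x ∈ Y := hY ▸ Set.mem_univ x
    exact this
  have hcont : Continuous fun x => (⌊g x - g x₀⌋ : ℤ) := by
    apply IsLocallyConstant.continuous
    rw [IsLocallyConstant.iff_exists_open]
    intro x
    obtain ⟨n, hn⟩ := key x
    refine ⟨(fun y => g y - g x₀) ⁻¹' Set.Ioo ((n : ℝ) - 1) ((n : ℝ) + 1),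
      (isOpen_Ioo).preimage (g.continuous.sub continuous_const), ?_, ?_⟩
    · refine ⟨?_, ?_⟩ <;> show _ < _ <;> simp only [] <;> rw [hn] <;> push_cast <;> linarith
    · intro y hy
      obtain ⟨m, hm⟩ := key y
      obtain ⟨h1, h2⟩ := hy
      simp only [] at h1 h2
      rw [hm] at h1 h2
      rw [hm]
      rw [hn]
      have hmn : m = n := by
        have : (n : ℝ) - 1 < m := h1
        have : (m : ℝ) < n + 1 := h2
        have l1 : n - 1 < m := by exact_mod_cast h1
        have l2 : m < n + 1 := by exact_mod_cast h2
        omega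
      rw [hmn]
  refine ⟨⟨fun x => ⌊g x - g x₀⌋, hcont⟩, fun x => ?_⟩
  have hfloor : ∀ x : X, ((⌊g x - g x₀⌋ : ℤ) : ℝ) = g x - g x₀ := by
    intro x
    obtain ⟨n, hn⟩ := key x
    rw [hn, Int.floor_intCast]
  have : (f x : ℝ) = ((⌊g (T x) - g x₀⌋ : ℤ) : ℝ) - ((⌊g x - g x₀⌋ : ℤ) : ℝ) := by
    rw [hfloor, hfloor, hgf x]; ring
  exact_mod_cast this

end Balance
end

section
/- Let T be a finite tree whose vertex set is bipartitioned into X and Y with Card(X), Card(Y) ≥ 2, all edges joining X to Y, and edge set E. Let G be an abelian group, H a subgroup of G, and g : X ∪ Y ∪ E → G a function such that (1) g maps every vertex into H, and (2) for every x ∈ X, g(x) = Σ_{y: (x,y)∈E} g(x,y), and for every y ∈ Y, g(y) = Σ_{x: (x,y)∈E} g(x,y). Then g(x,y) ∈ H for every edge (x,y) ∈ E. -/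
open Filter Topology MeasureTheory

namespace Balance

/-- The bipartite tree lemma: if vertex values lie in a subgroup `H` and each vertex value
is the sum of the values of its incident edges, then every edge value lies in `H`. -/
theorem bipartite_tree_lemma {V : Type*} [Fintype V] [DecidableEq V]
    (Gr : SimpleGraph V) [DecidableRel Gr.Adj] (htree : Gr.IsTree)
    (X Y : Finset V) (hpart : ∀ v : V, v ∈ X ∨ v ∈ Y) (hdisj : Disjoint X Y)
    (hbip : ∀ u v : V, Gr.Adj u v → (u ∈ X ∧ v ∈ Y) ∨ (u ∈ Y ∧ v ∈ X))
    (hX : 2 ≤ X.card) (hY : 2 ≤ Y.card)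
    {G : Type*} [AddCommGroup G] (H : AddSubgroup G)
    (gv : V → G) (ge : V → V → G)
    (h1 : ∀ v : V, gv v ∈ H)
    (h2x : ∀ x ∈ X, gv x = ∑ y ∈ Y.filter (fun y => Gr.Adj x y), ge x y)
    (h2y : ∀ y ∈ Y, gv y = ∑ x ∈ X.filter (fun x => Gr.Adj x y), ge x y) :
    ∀ x ∈ X, ∀ y ∈ Y, Gr.Adj x y → ge x y ∈ H := by
  intro x hx y hy hadj
  classical
  set G' := Gr \ SimpleGraph.fromEdgeSet {s(x, y)} with hG'
  have hbridge : Gr.IsBridge s(x, y) :=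
    SimpleGraph.isAcyclic_iff_forall_adj_isBridge.mp htree.IsAcyclic hadj
  have hynr : ¬ G'.Reachable x y := hbridge
  set C : Finset V := Finset.univ.filter (fun v => G'.Reachable x v) with hC
  have hxC : x ∈ C := by
    simp only [hC, Finset.mem_filter, Finset.mem_univ, true_and]
    exact SimpleGraph.Reachable.refl x
  have hyC : y ∉ C := by simpa [hC] using hynr
  -- edges other than (x,y) preserve membership in C
  have hedge : ∀ a b : V, Gr.Adj a b → s(a, b) ≠ s(x, y) → (a ∈ C ↔ b ∈ C) := by
    intro a b hab hne
    have hadj' : G'.Adj a b := by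
      simp only [hG', SimpleGraph.sdiff_adj, SimpleGraph.fromEdgeSet_adj]
      exact ⟨hab, fun h => hne h.1⟩
    simp only [hC, Finset.mem_filter, Finset.mem_univ, true_and]
    exact ⟨fun h => h.trans hadj'.reachable, fun h => h.trans hadj'.symm.reachable⟩
  -- pair (a,b) in X×Y adjacent with s(a,b)=s(x,y) implies a=x, b=y
  have hpair : ∀ a ∈ X, ∀ b ∈ Y, s(a, b) = s(x, y) → a = x ∧ b = y := by
    intro a ha b hb h
    rcases Sym2.eq_iff.mp h with ⟨rfl, rfl⟩ | ⟨rfl, rfl⟩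
    · exact ⟨rfl, rfl⟩
    · exact absurd hy (Finset.disjoint_left.mp hdisj ha)
  -- the two pair sets
  set S1 : Finset (V × V) :=
    (X ×ˢ Y).filter (fun p => Gr.Adj p.1 p.2 ∧ p.1 ∈ C) with hS1
  set S2 : Finset (V × V) :=
    (X ×ˢ Y).filter (fun p => Gr.Adj p.1 p.2 ∧ p.2 ∈ C) with hS2
  have hsub : S2 ⊆ S1 := by
    intro p hp
    simp only [hS1, hS2, Finset.mem_filter, Finset.mem_product] at *
    refine ⟨hp.1, hp.2.1, ?_⟩
    by_cases hne : s(p.1, p.2) = s(x, y)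
    · obtain ⟨h1', h2'⟩ := hpair p.1 hp.1.1 p.2 hp.1.2 hne
      exact absurd (h2' ▸ hp.2.2) hyC
    · exact (hedge p.1 p.2 hp.2.1 hne).mpr hp.2.2
  have hdiff : S1 \ S2 = {(x, y)} := by
    ext p
    simp only [Finset.mem_sdiff, hS1, hS2, Finset.mem_filter, Finset.mem_product,
      Finset.mem_singleton]
    constructor
    · rintro ⟨⟨⟨hpX, hpY⟩, hpa, hpC⟩, hnot⟩
      by_cases hne : s(p.1, p.2) = s(x, y)
      · obtain ⟨h1', h2'⟩ := hpair p.1 hpX p.2 hpY hne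
        exact Prod.ext h1' h2'
      · exact absurd ⟨⟨hpX, hpY⟩, hpa, (hedge p.1 p.2 hpa hne).mp hpC⟩ hnot
    · rintro rfl
      exact ⟨⟨⟨hx, hy⟩, hadj, hxC⟩, fun h => hyC h.2.2⟩
  -- sum identity
  have hsum : (∑ p ∈ S1, ge p.1 p.2) - (∑ p ∈ S2, ge p.1 p.2) = ge x y := by
    rw [← Finset.sum_sdiff hsub, hdiff]
    simp
  -- express the sums via gv
  have hsum1 : (∑ p ∈ S1, ge p.1 p.2) = ∑ a ∈ X.filter (fun a => a ∈ C), gv a := by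
    rw [hS1]
    rw [Finset.sum_filter, Finset.sum_product]
    rw [Finset.sum_filter]
    refine Finset.sum_congr rfl fun a _ => ?_
    by_cases haC : a ∈ C
    · simp only [haC, and_true, if_true]
      rw [h2x a ‹a ∈ X›, Finset.sum_filter]
    · simp [haC]
  have hsum2 : (∑ p ∈ S2, ge p.1 p.2) = ∑ b ∈ Y.filter (fun b => b ∈ C), gv b := by
    rw [hS2]
    rw [Finset.sum_filter, Finset.sum_product_right]
    rw [Finset.sum_filter]
    refine Finset.sum_congr rfl fun b _ => ?_
    by_cases hbC : b ∈ C
    · simp only [hbC, and_true, if_true]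
      rw [h2y b ‹b ∈ Y›, Finset.sum_filter]
    · simp [hbC]
  rw [← hsum, hsum1, hsum2]
  exact sub_mem (AddSubgroup.sum_mem H fun a _ => h1 a) (AddSubgroup.sum_mem H fun b _ => h1 b)


end Balance
end

section
/- Let (X,T) be a minimal dendric subshift. Then (X,T) is balanced on letters if and only if it is balanced on all factors. -/
open Filter Topology MeasureTheory

namespace Balance

/-- the extension graph of the word `w` in the language of `X`: a bipartite graph on two
copies of the alphabet, with an edge between left copy `a` and right copy `b` iff `awb`
is in the language -/
def extGraph {A : Type*} (X : Set (ℤ → A)) (w : List A) : SimpleGraph (A ⊕ A) where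
  Adj u v :=
    (∃ a b, u = Sum.inl a ∧ v = Sum.inr b ∧ a :: (w ++ [b]) ∈ Lang X) ∨
    (∃ a b, v = Sum.inl a ∧ u = Sum.inr b ∧ a :: (w ++ [b]) ∈ Lang X)
  symm := by
    constructor
    rintro u v (⟨a, b, h1, h2, h3⟩ | ⟨a, b, h1, h2, h3⟩)
    · exact Or.inr ⟨a, b, h1, h2, h3⟩
    · exact Or.inl ⟨a, b, h1, h2, h3⟩
  loopless := by
    constructor
    rintro u (⟨a, b, h1, h2, _⟩ | ⟨a, b, h1, h2, _⟩) <;> rw [h1] at h2 <;> cases h2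

/-- the vertices of the extension graph: left extensions and right extensions of `w` -/
def extVerts {A : Type*} (X : Set (ℤ → A)) (w : List A) : Set (A ⊕ A) :=
  {v | (∃ a, v = Sum.inl a ∧ a :: w ∈ Lang X) ∨ (∃ b, v = Sum.inr b ∧ w ++ [b] ∈ Lang X)}

/-- a minimal dendric subshift: the extension graph of every word of the language is a tree -/
def IsDendric {A : Type*} [TopologicalSpace A] (X : Set (ℤ → A)) : Prop :=
  IsMinimalSubshift X ∧
    ∀ w ∈ Lang X, (SimpleGraph.induce (extVerts X w) (extGraph X w)).IsTree

section
variable {A : Type*} [DecidableEq A]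

lemma occ_nil (v : List A) : occ v [] = if v = [] then 1 else 0 := by
  simp [occ, List.range_succ, List.filter]
  rcases eq_or_ne v [] with h | h <;> simp [h]

lemma occ_cons (v : List A) (x : A) (w : List A) :
    occ v (x :: w) = (if v <+: x :: w then 1 else 0) + occ v w := by
  have : List.range (w.length + 1 + 1) = 0 :: (List.range (w.length + 1)).map Nat.succ :=
    List.range_succ_eq_map
  simp only [occ, List.length_cons, this, List.filter_cons, List.drop_zero]
  have h2 : ((fun i => decide (v <+: List.drop i (x :: w))) ∘ Nat.succ) =
      fun i => decide (v <+: List.drop i w) := by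
    funext i; simp [List.drop_succ_cons]
  rcases Decidable.em (v <+: x :: w) with h | h <;>
    simp [h, List.filter_map, h2] <;> omega
end

section
variable {A : Type*} [DecidableEq A]

lemma occ_cons_sum [Fintype A] (v w : List A) :
    occ v w = ∑ a : A, occ (a :: v) w + (if v <+: w then 1 else 0) := by
  induction w with
  | nil => simp [occ_nil]
  | cons x w ih =>
      simp only [occ_cons, ih]
      have h1 : ∀ a : A, (if a :: v <+: x :: w then 1 else 0) =
          if a = x then (if v <+: w then 1 else 0) else 0 := by
        intro a
        by_cases h : a = x
        · subst h; simp [List.cons_prefix_cons]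
        · simp [List.cons_prefix_cons, h]
      rw [Finset.sum_add_distrib]
      simp only [h1, Finset.sum_ite_eq' Finset.univ x fun _ => if v <+: w then 1 else 0]
      simp; omega

lemma concat_prefix_iff (l : List A) (b : A) (w : List A) :
    l ++ [b] <+: w ↔ l <+: w ∧ w[l.length]? = some b := by
  constructor
  · rintro ⟨t, ht⟩
    refine ⟨⟨[b] ++ t, by simp [← ht]⟩, ?_⟩
    rw [← ht]
    simp [List.getElem_append_right (le_refl l.length)]
  · rintro ⟨⟨t, ht⟩, hg⟩
    subst ht
    rw [List.getElem?_append_right (le_refl _)] at hg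
    simp at hg
    obtain ⟨t', rfl⟩ : ∃ t', t = b :: t' := by
      cases t with
      | nil => simp at hg
      | cons c t' => simp at hg; exact ⟨t', by rw [hg]⟩
    exact ⟨t', by simp⟩

lemma sum_concat_prefix [Fintype A] (l w : List A) :
    (∑ b : A, if l ++ [b] <+: w then 1 else 0) =
      if l <+: w ∧ l.length < w.length then (1:ℕ) else 0 := by
  by_cases h : l <+: w ∧ l.length < w.length
  · obtain ⟨hp, hl⟩ := h
    have hb : ∀ b : A, (l ++ [b] <+: w) ↔ b = w[l.length] := by
      intro b
      rw [concat_prefix_iff]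
      simp [hp, List.getElem?_eq_getElem hl, eq_comm]
    simp only [hb]
    rw [Finset.sum_ite_eq' Finset.univ (w[l.length]) fun _ => (1:ℕ)]
    simp [hp, hl]
  · have hb : ∀ b : A, ¬ (l ++ [b] <+: w) := by
      intro b hc
      rw [concat_prefix_iff] at hc
      obtain ⟨h1, h2⟩ := hc
      have := List.getElem?_eq_some_iff.mp h2
      exact h ⟨h1, this.1⟩
    simp [hb, h]

lemma occ_concat_sum [Fintype A] (v w : List A) :
    occ v w = ∑ b : A, occ (v ++ [b]) w + (if v <:+ w then 1 else 0) := by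
  induction w with
  | nil =>
      by_cases h : v = [] <;> simp [occ_nil, List.suffix_nil, h]
  | cons x w ih =>
      simp only [occ_cons, ih]
      rw [Finset.sum_add_distrib, sum_concat_prefix]
      have hsuf : v <:+ x :: w ↔ v = x :: w ∨ v <:+ w := List.suffix_cons_iff
      by_cases hp : v <+: x :: w
      · have hlen : v.length ≤ w.length + 1 := by
          have := hp.length_le; simpa using this
        by_cases hl : v.length < w.length + 1
        · have hne : v ≠ x :: w := by
            intro h; subst h; simp at hl
          have : (v <:+ x :: w) ↔ (v <:+ w) := by
            rw [hsuf]; simp [hne]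
          simp only [List.length_cons, hp, hl, and_self, if_true, this]
          omega
        · have hveq : v = x :: w := by
            have : v.length = w.length + 1 := by omega
            exact List.IsPrefix.eq_of_length hp (by simpa using this)
          have h1 : ¬ (v <:+ w) := by
            intro hc; have := hc.length_le; rw [hveq] at this; simp at this
          have h2 : v <:+ x :: w := by rw [hveq]
          simp only [List.length_cons, hp, true_and, hl, if_false, h1, h2, if_true, if_false]
          omega
      · have h1 : (v <:+ x :: w) ↔ (v <:+ w) := by
          rw [hsuf]
          constructor
          · rintro (h | h)
            · exact absurd (h ▸ List.prefix_refl _) hp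
            · exact h
          · exact Or.inr
        simp [hp, h1]

end
section
variable {A : Type*}

lemma factorAt_eq (u : ℤ → A) (i : ℤ) (n : ℕ) :
    factorAt u i n = (List.range n).map (fun k : ℕ => u (i + (k:ℤ))) := by
  unfold factorAt
  show List.map _ (List.flatMap (fun a : ℕ => [(a : Int)]) (List.range n)) = _
  rw [List.map_flatMap]
  simp only [List.map_cons, List.map_nil]
  rw [← List.map_eq_flatMap]

lemma length_factorAt (u : ℤ → A) (i : ℤ) (n : ℕ) : (factorAt u i n).length = n := by
  rw [factorAt_eq, List.length_map, List.length_range]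

lemma getElem_factorAt (u : ℤ → A) (i : ℤ) (n : ℕ) (k : ℕ) (hk : k < n) :
    (factorAt u i n)[k]'(by rw [length_factorAt]; exact hk) = u (i + k) := by
  simp only [factorAt_eq]
  rw [List.getElem_map, List.getElem_range]

lemma factorAt_add (u : ℤ → A) (i : ℤ) (m n : ℕ) :
    factorAt u i (m + n) = factorAt u i m ++ factorAt u (i + m) n := by
  apply List.ext_getElem
  · simp [length_factorAt]
  · intro k h1 h2
    rw [length_factorAt] at h1
    rw [getElem_factorAt u i (m+n) k h1]
    rcases Nat.lt_or_ge k m with hk | hk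
    · rw [List.getElem_append_left (by rwa [length_factorAt])]
      rw [getElem_factorAt u i m k hk]
    · rw [List.getElem_append_right (by rwa [length_factorAt])]
      have hk2 : k - (factorAt u i m).length < n := by rw [length_factorAt]; omega
      rw [getElem_factorAt u (i + m) n _ hk2]
      congr 1
      rw [length_factorAt]
      have : (↑(k - m) : ℤ) = (k : ℤ) - m := by push_cast [hk]; ring
      rw [this]; ring

lemma IsFactor.of_infix {u : ℤ → A} {v w : List A} (hvw : v <:+: w) (hw : IsFactor u w) :
    IsFactor u v := by
  obtain ⟨s, t, hst⟩ := hvw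
  obtain ⟨i, hi⟩ := hw
  refine ⟨i + s.length, ?_⟩
  have hlen : w.length = s.length + (v.length + t.length) := by rw [← hst]; simp only [List.length_append]; omega
  rw [hlen, factorAt_add, factorAt_add] at hi
  have h1 : s = factorAt u i s.length ∧
      v ++ t = factorAt u (i + s.length) v.length ++ factorAt u (i + s.length + v.length) t.length := by
    apply List.append_inj _ (by simp [length_factorAt])
    rw [← List.append_assoc, hst]; exact hi
  have h2 := List.append_inj h1.2 (by simp [length_factorAt])
  exact h2.1

lemma mem_lang_of_infix {X : Set (ℤ → A)} {v w : List A} (hvw : v <:+: w) (hw : w ∈ Lang X) :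
    v ∈ Lang X := by
  obtain ⟨x, hx, hf⟩ := hw
  exact ⟨x, hx, hf.of_infix hvw⟩

lemma infix_of_occ_pos [DecidableEq A] {v w : List A} (h : 0 < occ v w) : v <:+: w := by
  unfold occ at h
  obtain ⟨i, hi⟩ := List.exists_mem_of_ne_nil _ (List.ne_nil_of_length_pos h)
  have := List.of_mem_filter hi
  simp only [decide_eq_true_eq] at this
  exact this.isInfix.trans (List.drop_suffix i w).isInfix

end
section
variable {A : Type*}

section Bridge

variable [Fintype A] [DecidableEq A] (X : Set (ℤ → A))

lemma extGraph_adj_iff (u : List A) (a b : A) :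
    (extGraph X u).Adj (Sum.inl a) (Sum.inr b) ↔ a :: u ++ [b] ∈ Lang X := by
  constructor
  · rintro (⟨a', b', h1, h2, h3⟩ | ⟨a', b', h1, h2, _⟩)
    · obtain rfl : a' = a := Sum.inl.inj h1.symm
      obtain rfl : b' = b := Sum.inr.inj h2.symm
      simpa using h3
    · exact absurd h2 (by simp)
  · intro h
    exact Or.inl ⟨a, b, rfl, rfl, by simpa using h⟩

lemma bridge_identity
    (u : List A) (a b : A)
    (hT : (SimpleGraph.induce (extVerts X u) (extGraph X u)).IsTree)
    (hv : a :: u ++ [b] ∈ Lang X) :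
    ∃ SL SR : Finset A, (∀ a' ∈ SL, a' :: u ∈ Lang X) ∧ (∀ b' ∈ SR, u ++ [b'] ∈ Lang X) ∧
      ∀ w ∈ Lang X,
        |(occ (a :: u ++ [b]) w : ℤ) -
          ((∑ a' ∈ SL, (occ (a' :: u) w : ℤ)) - ∑ b' ∈ SR, (occ (u ++ [b']) w : ℤ))| ≤
          2 * Fintype.card A := by
  classical
  set G' := SimpleGraph.induce (extVerts X u) (extGraph X u) with hG'
  have hau : a :: u ∈ Lang X :=
    mem_lang_of_infix ⟨[], [b], by simp⟩ hv
  have hub : u ++ [b] ∈ Lang X :=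
    mem_lang_of_infix ⟨[a], [], by simp⟩ hv
  have hva : Sum.inl a ∈ extVerts X u := Or.inl ⟨a, rfl, hau⟩
  have hvb : Sum.inr b ∈ extVerts X u := Or.inr ⟨b, rfl, hub⟩
  set va : ↥(extVerts X u) := ⟨Sum.inl a, hva⟩ with hva'
  set vb : ↥(extVerts X u) := ⟨Sum.inr b, hvb⟩ with hvb'
  have hadj : G'.Adj va vb := by
    show (extGraph X u).Adj (Sum.inl a) (Sum.inr b)
    rw [extGraph_adj_iff]
    exact hv
  have hbridge : ¬ (G' \ SimpleGraph.fromEdgeSet {s(va, vb)}).Reachable va vb :=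
    ((SimpleGraph.isBridge_iff).mp
      ((SimpleGraph.isAcyclic_iff_forall_adj_isBridge.mp hT.IsAcyclic) hadj))
  set H := G' \ SimpleGraph.fromEdgeSet {s(va, vb)} with hH
  set SL : Finset A := Finset.univ.filter
    (fun a' => ∃ h : Sum.inl a' ∈ extVerts X u, H.Reachable ⟨Sum.inl a', h⟩ va) with hSL
  set SR : Finset A := Finset.univ.filter
    (fun b' => ∃ h : Sum.inr b' ∈ extVerts X u, H.Reachable ⟨Sum.inr b', h⟩ va) with hSR
  have hSLmem : ∀ a' ∈ SL, a' :: u ∈ Lang X := by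
    intro a' ha'
    rw [hSL, Finset.mem_filter] at ha'
    obtain ⟨h, -⟩ := ha'.2
    rcases h with ⟨a'', heq, hmem⟩ | ⟨b'', heq, -⟩
    · obtain rfl : a'' = a' := Sum.inl.inj heq.symm
      exact hmem
    · exact absurd heq (by simp)
  have hSRmem : ∀ b' ∈ SR, u ++ [b'] ∈ Lang X := by
    intro b' hb'
    rw [hSR, Finset.mem_filter] at hb'
    obtain ⟨h, -⟩ := hb'.2
    rcases h with ⟨a'', heq, -⟩ | ⟨b'', heq, hmem⟩
    · exact absurd heq (by simp)
    · obtain rfl : b'' = b' := Sum.inr.inj heq.symm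
      exact hmem
  have hC1 : a ∈ SL := by
    rw [hSL, Finset.mem_filter]
    exact ⟨Finset.mem_univ _, hva, by exact SimpleGraph.Reachable.refl va⟩
  have hC2 : b ∉ SR := by
    rw [hSR, Finset.mem_filter]
    rintro ⟨-, h, hr⟩
    have : (⟨Sum.inr b, h⟩ : ↥(extVerts X u)) = vb := Subtype.ext rfl
    rw [this] at hr
    exact hbridge hr.symm
  have hC3 : ∀ a' b', a' :: u ++ [b'] ∈ Lang X → ¬(a' = a ∧ b' = b) →
      (a' ∈ SL ↔ b' ∈ SR) := by
    intro a' b' hlang hne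
    have hau' : a' :: u ∈ Lang X := mem_lang_of_infix ⟨[], [b'], by simp⟩ hlang
    have hub' : u ++ [b'] ∈ Lang X := mem_lang_of_infix ⟨[a'], [], by simp⟩ hlang
    have hl : Sum.inl a' ∈ extVerts X u := Or.inl ⟨a', rfl, hau'⟩
    have hr : Sum.inr b' ∈ extVerts X u := Or.inr ⟨b', rfl, hub'⟩
    have hHadj : H.Adj ⟨Sum.inl a', hl⟩ ⟨Sum.inr b', hr⟩ := by
      rw [hH, SimpleGraph.sdiff_adj]
      constructor
      · show (extGraph X u).Adj (Sum.inl a') (Sum.inr b')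
        rw [extGraph_adj_iff]; exact hlang
      · rw [SimpleGraph.fromEdgeSet_adj]
        rintro ⟨hmem, -⟩
        rw [Set.mem_singleton_iff, Sym2.eq_iff] at hmem
        rcases hmem with ⟨h1, h2⟩ | ⟨h1, h2⟩
        · apply hne
          constructor
          · have := congrArg Subtype.val h1
            simpa [hva'] using this
          · have := congrArg Subtype.val h2
            simpa [hvb'] using this
        · have := congrArg Subtype.val h1
          simp [hva'] at this
    constructor
    · intro hmem
      rw [hSL, Finset.mem_filter] at hmem
      obtain ⟨-, h, hreach⟩ := hmem
      rw [hSR, Finset.mem_filter]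
      refine ⟨Finset.mem_univ _, hr, ?_⟩
      have : (⟨Sum.inl a', h⟩ : ↥(extVerts X u)) = ⟨Sum.inl a', hl⟩ := Subtype.ext rfl
      rw [this] at hreach
      exact (hHadj.symm.reachable).trans hreach
    · intro hmem
      rw [hSR, Finset.mem_filter] at hmem
      obtain ⟨-, h, hreach⟩ := hmem
      rw [hSL, Finset.mem_filter]
      refine ⟨Finset.mem_univ _, hl, ?_⟩
      have : (⟨Sum.inr b', h⟩ : ↥(extVerts X u)) = ⟨Sum.inr b', hr⟩ := Subtype.ext rfl
      rw [this] at hreach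
      exact (hHadj.reachable).trans hreach
  refine ⟨SL, SR, hSLmem, hSRmem, ?_⟩
  intro w hw
  set f : A → A → ℤ := fun a' b' => (occ (a' :: u ++ [b']) w : ℤ) with hf
  have hrow : ∀ a' : A, (occ (a' :: u) w : ℤ) =
      (∑ b' : A, f a' b') + (if (a' :: u) <:+ w then (1:ℤ) else 0) := by
    intro a'
    rw [occ_concat_sum (a' :: u) w]
    push_cast
    rfl
  have hcol : ∀ b' : A, (occ (u ++ [b']) w : ℤ) =
      (∑ a' : A, f a' b') + (if (u ++ [b']) <+: w then (1:ℤ) else 0) := by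
    intro b'
    rw [occ_cons_sum (u ++ [b']) w]
    push_cast
    rfl
  have hpoint : ∀ a' b' : A,
      (if a' ∈ SL then f a' b' else 0) - (if b' ∈ SR then f a' b' else 0)
        = if a' = a ∧ b' = b then f a b else 0 := by
    intro a' b'
    by_cases h : a' = a ∧ b' = b
    · obtain ⟨rfl, rfl⟩ := h
      simp [hC1, hC2]
    · rw [if_neg h]
      by_cases hf0 : f a' b' = 0
      · simp [hf0]
      · have hpos : 0 < occ (a' :: u ++ [b']) w :=
          Nat.pos_of_ne_zero (fun h0 => hf0 (by simp only [hf]; exact_mod_cast h0))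
        have hlang : a' :: u ++ [b'] ∈ Lang X :=
          mem_lang_of_infix (infix_of_occ_pos hpos) hw
        have := hC3 a' b' hlang h
        by_cases hs : a' ∈ SL
        · rw [if_pos hs, if_pos (this.mp hs)]; ring
        · rw [if_neg hs, if_neg (fun hr => hs (this.mpr hr))]; ring
  have hkey : (occ (a :: u ++ [b]) w : ℤ) =
      (∑ a' ∈ SL, ∑ b' : A, f a' b') - (∑ b' ∈ SR, ∑ a' : A, f a' b') := by
    have hstep : (∑ a' ∈ SL, ∑ b' : A, f a' b') - (∑ b' ∈ SR, ∑ a' : A, f a' b')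
        = ∑ a' : A, ∑ b' : A,
            ((if a' ∈ SL then f a' b' else 0) - (if b' ∈ SR then f a' b' else 0)) := by
      have pull1 : ∀ a' : A, (∑ b' : A, if a' ∈ SL then f a' b' else 0)
          = if a' ∈ SL then ∑ b' : A, f a' b' else 0 := fun a' => by split <;> simp
      simp only [Finset.sum_sub_distrib]
      congr 1
      · simp only [pull1]
        rw [← Finset.sum_filter]
        congr 1
        simp
      · rw [show (∑ b' ∈ SR, ∑ a' : A, f a' b') = ∑ a' : A, ∑ b' ∈ SR, f a' b'
            from Finset.sum_comm]
        apply Finset.sum_congr rfl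
        intro a' _
        rw [← Finset.sum_filter]
        congr 1
        simp
    rw [hstep]
    simp only [hpoint]
    have hinner : ∀ a' : A, (∑ b' : A, if a' = a ∧ b' = b then f a b else 0)
        = if a' = a then f a b else 0 := by
      intro a'
      by_cases h : a' = a
      · subst h; simp
      · simp [h]
    simp only [hinner]
    simp only [Finset.sum_ite_eq' Finset.univ a (fun _ => f a b), Finset.mem_univ, if_true]
    rfl
  have hL1 : (∑ a' ∈ SL, (occ (a' :: u) w : ℤ))
      = (∑ a' ∈ SL, ∑ b' : A, f a' b')
        + ∑ a' ∈ SL, (if (a' :: u) <:+ w then (1:ℤ) else 0) := by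
    rw [← Finset.sum_add_distrib]
    exact Finset.sum_congr rfl (fun a' _ => hrow a')
  have hL2 : (∑ b' ∈ SR, (occ (u ++ [b']) w : ℤ))
      = (∑ b' ∈ SR, ∑ a' : A, f a' b')
        + ∑ b' ∈ SR, (if (u ++ [b']) <+: w then (1:ℤ) else 0) := by
    rw [← Finset.sum_add_distrib]
    exact Finset.sum_congr rfl (fun b' _ => hcol b')
  set E1 : ℤ := ∑ a' ∈ SL, (if (a' :: u) <:+ w then (1:ℤ) else 0) with hE1def
  set E2 : ℤ := ∑ b' ∈ SR, (if (u ++ [b']) <+: w then (1:ℤ) else 0) with hE2def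
  have hE1 : 0 ≤ E1 ∧ E1 ≤ Fintype.card A := by
    constructor
    · apply Finset.sum_nonneg; intro i _; split <;> norm_num
    · calc E1 ≤ ∑ _a' ∈ SL, (1:ℤ) := Finset.sum_le_sum (fun i _ => by split <;> norm_num)
        _ = SL.card := by simp
        _ ≤ Fintype.card A := by exact_mod_cast Finset.card_le_univ SL
  have hE2 : 0 ≤ E2 ∧ E2 ≤ Fintype.card A := by
    constructor
    · apply Finset.sum_nonneg; intro i _; split <;> norm_num
    · calc E2 ≤ ∑ _b' ∈ SR, (1:ℤ) := Finset.sum_le_sum (fun i _ => by split <;> norm_num)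
        _ = SR.card := by simp
        _ ≤ Fintype.card A := by exact_mod_cast Finset.card_le_univ SR
  have hmain : (occ (a :: u ++ [b]) w : ℤ)
      - ((∑ a' ∈ SL, (occ (a' :: u) w : ℤ)) - ∑ b' ∈ SR, (occ (u ++ [b']) w : ℤ))
      = E2 - E1 := by
    rw [hL1, hL2, hkey]; ring
  rw [hmain, abs_le]
  have hcard : (0:ℤ) ≤ Fintype.card A := by positivity
  constructor
  · linarith [hE1.2, hE2.1]
  · linarith [hE1.1, hE2.2]

end Bridge
end

section
variable {A : Type*}

lemma key_combination [Fintype A] [DecidableEq A] (X : Set (ℤ → A))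
    (hD : ∀ u ∈ Lang X, (SimpleGraph.induce (extVerts X u) (extGraph X u)).IsTree) :
    ∀ (n : ℕ) (v : List A), v ∈ Lang X → v.length = n →
      ∃ (c : A → ℤ) (K : ℕ), ∀ w ∈ Lang X,
        |(occ v w : ℤ) - ∑ x : A, c x * occ [x] w| ≤ K := by
  intro n
  induction n using Nat.strong_induction_on with
  | _ n ih =>
    intro v hv hlen
    match v with
    | [] =>
        refine ⟨fun _ => 1, 1, ?_⟩
        intro w hw
        rw [occ_cons_sum ([] : List A) w]
        push_cast
        simp [List.nil_prefix]
    | [a] =>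
        refine ⟨fun x => if x = a then 1 else 0, 0, ?_⟩
        intro w hw
        have : (∑ x : A, (if x = a then (1:ℤ) else 0) * occ [x] w) = occ [a] w := by
          rw [Finset.sum_congr rfl (fun x _ => by rw [ite_mul, one_mul, zero_mul])]
          rw [Finset.sum_ite_eq' Finset.univ a (fun x => ((occ [x] w : ℤ)))]
          simp
        rw [this]
        simp
    | a :: t₀ :: t₁ =>
        set t := t₀ :: t₁ with ht
        have htne : t ≠ [] := by simp [ht]
        set u := t.dropLast with hu
        set b := t.getLast htne with hb
        have hveq : a :: t = a :: u ++ [b] := by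
          rw [hu, hb, List.cons_append, List.dropLast_append_getLast htne]
        have hlt : u.length + 2 = n := by
          have h1 : t.length = u.length + 1 := by
            rw [hu]; rw [List.length_dropLast]; simp [ht]
          simp only [← hlen, List.length_cons] at *
          omega
        have hvlang : a :: u ++ [b] ∈ Lang X := hveq ▸ hv
        have hulang : u ∈ Lang X :=
          mem_lang_of_infix ⟨[a], [b], by simp⟩ hvlang
        obtain ⟨SL, SR, hSLmem, hSRmem, hbr⟩ :=
          bridge_identity X u a b (hD u hulang) hvlang
        have IHL : ∀ a' : A, ∃ (c : A → ℤ) (K : ℕ), a' ∈ SL →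
            ∀ w ∈ Lang X, |(occ (a' :: u) w : ℤ) - ∑ x : A, c x * occ [x] w| ≤ K := by
          intro a'
          by_cases h : a' ∈ SL
          · obtain ⟨c, K, hcK⟩ := ih (u.length + 1) (by omega) (a' :: u)
              (hSLmem _ h) (by simp)
            exact ⟨c, K, fun _ => hcK⟩
          · exact ⟨0, 0, fun h' => absurd h' h⟩
        have IHR : ∀ b' : A, ∃ (c : A → ℤ) (K : ℕ), b' ∈ SR →
            ∀ w ∈ Lang X, |(occ (u ++ [b']) w : ℤ) - ∑ x : A, c x * occ [x] w| ≤ K := by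
          intro b'
          by_cases h : b' ∈ SR
          · obtain ⟨c, K, hcK⟩ := ih (u.length + 1) (by omega) (u ++ [b'])
              (hSRmem _ h) (by simp)
            exact ⟨c, K, fun _ => hcK⟩
          · exact ⟨0, 0, fun h' => absurd h' h⟩
        choose cL KL hL using IHL
        choose cR KR hR using IHR
        refine ⟨fun x => (∑ a' ∈ SL, cL a' x) - ∑ b' ∈ SR, cR b' x,
          2 * Fintype.card A + ((∑ a' ∈ SL, KL a') + (∑ b' ∈ SR, KR b')), ?_⟩
        intro w hw
        rw [hveq]
        have e1 : (∑ x : A, ((∑ a' ∈ SL, cL a' x) - ∑ b' ∈ SR, cR b' x) * (occ [x] w : ℤ))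
            = (∑ a' ∈ SL, ∑ x : A, cL a' x * occ [x] w)
              - (∑ b' ∈ SR, ∑ x : A, cR b' x * occ [x] w) := by
          simp only [sub_mul, Finset.sum_sub_distrib, Finset.sum_mul]
          congr 1 <;> rw [Finset.sum_comm]
        have hsplit : (occ (a :: u ++ [b]) w : ℤ) - ∑ x : A,
              ((∑ a' ∈ SL, cL a' x) - ∑ b' ∈ SR, cR b' x) * (occ [x] w : ℤ)
            = ((occ (a :: u ++ [b]) w : ℤ)
                - ((∑ a' ∈ SL, (occ (a' :: u) w : ℤ)) - ∑ b' ∈ SR, (occ (u ++ [b']) w : ℤ)))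
              + ((∑ a' ∈ SL, ((occ (a' :: u) w : ℤ) - ∑ x : A, cL a' x * occ [x] w))
              - (∑ b' ∈ SR, ((occ (u ++ [b']) w : ℤ) - ∑ x : A, cR b' x * occ [x] w))) := by
          rw [e1]
          simp only [Finset.sum_sub_distrib]
          ring
        rw [hsplit]
        have h1 := hbr w hw
        have h2 : |∑ a' ∈ SL, ((occ (a' :: u) w : ℤ) - ∑ x : A, cL a' x * occ [x] w)|
            ≤ ∑ a' ∈ SL, (KL a' : ℤ) :=
          (Finset.abs_sum_le_sum_abs _ _).trans
            (Finset.sum_le_sum (fun a' ha' => hL a' ha' w hw))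
        have h3 : |∑ b' ∈ SR, ((occ (u ++ [b']) w : ℤ) - ∑ x : A, cR b' x * occ [x] w)|
            ≤ ∑ b' ∈ SR, (KR b' : ℤ) :=
          (Finset.abs_sum_le_sum_abs _ _).trans
            (Finset.sum_le_sum (fun b' hb' => hR b' hb' w hw))
        have habs : ∀ x y z : ℤ, |x + (y - z)| ≤ |x| + (|y| + |z|) := by
          intro x y z
          calc |x + (y - z)| ≤ |x| + |y - z| := abs_add_le _ _
            _ ≤ |x| + (|y| + |z|) := add_le_add le_rfl (abs_sub y z)
        calc |_ + (_ - _)| ≤ _ := habs _ _ _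
          _ ≤ (2 * Fintype.card A : ℤ) + ((∑ a' ∈ SL, (KL a' : ℤ)) + ∑ b' ∈ SR, (KR b' : ℤ)) := by
              apply add_le_add _ (add_le_add h2 h3)
              exact_mod_cast h1
          _ = ((2 * Fintype.card A + ((∑ a' ∈ SL, KL a') + (∑ b' ∈ SR, KR b')) : ℕ) : ℤ) := by
              push_cast
              ring
end
/-- A minimal dendric subshift is balanced on letters iff it is balanced on all factors. -/
theorem dendric_balanced_letters_iff_factors {A : Type*} [Fintype A] [DecidableEq A]
    [TopologicalSpace A] [DiscreteTopology A]
    (X : Set (ℤ → A)) (hX : IsDendric X) :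
    (∀ a : A, SubshiftBalancedOn X [a]) ↔ (∀ v ∈ Lang X, SubshiftBalancedOn X v) := by
  constructor
  · intro hbal v hv
    obtain ⟨c, K, hcK⟩ := key_combination X hX.2 v.length v hv rfl
    choose C hC using hbal
    refine ⟨2 * K + ∑ x : A, (c x).natAbs * C x, ?_⟩
    intro w w' hw hw' hlen
    have hCx : ∀ x : A, |(occ [x] w : ℤ) - (occ [x] w' : ℤ)| ≤ (C x : ℤ) := by
      intro x
      have h1 := hC x w w' hw hw' hlen
      have h2 : (((occ [x] w : ℤ) - (occ [x] w' : ℤ)).natAbs : ℤ) ≤ (C x : ℤ) := by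
        exact_mod_cast h1
      rwa [← Int.abs_eq_natAbs] at h2
    have hsplit : (occ v w : ℤ) - (occ v w' : ℤ)
        = ((occ v w : ℤ) - ∑ x : A, c x * occ [x] w)
          - ((occ v w' : ℤ) - ∑ x : A, c x * occ [x] w')
          + ∑ x : A, c x * ((occ [x] w : ℤ) - (occ [x] w' : ℤ)) := by
      simp only [mul_sub, Finset.sum_sub_distrib]
      ring
    have habs : |(occ v w : ℤ) - (occ v w' : ℤ)|
        ≤ (K : ℤ) + (K : ℤ) + ∑ x : A, (|c x| * (C x : ℤ)) := by
      rw [hsplit]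
      calc |_| ≤ |((occ v w : ℤ) - ∑ x : A, c x * occ [x] w)
            - ((occ v w' : ℤ) - ∑ x : A, c x * occ [x] w')|
            + |∑ x : A, c x * ((occ [x] w : ℤ) - (occ [x] w' : ℤ))| := abs_add_le _ _
        _ ≤ (|((occ v w : ℤ) - ∑ x : A, c x * occ [x] w)|
            + |((occ v w' : ℤ) - ∑ x : A, c x * occ [x] w')|)
            + ∑ x : A, |c x * ((occ [x] w : ℤ) - (occ [x] w' : ℤ))| :=
            add_le_add (abs_sub _ _) (Finset.abs_sum_le_sum_abs _ _)
        _ ≤ ((K : ℤ) + (K : ℤ)) + ∑ x : A, (|c x| * (C x : ℤ)) := by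
            apply add_le_add (add_le_add (hcK w hw) (hcK w' hw'))
            apply Finset.sum_le_sum
            intro x _
            rw [abs_mul]
            exact mul_le_mul_of_nonneg_left (hCx x) (abs_nonneg _)
    have hcast : (((occ v w : ℤ) - (occ v w' : ℤ)).natAbs : ℤ)
        ≤ ((2 * K + ∑ x : A, (c x).natAbs * C x : ℕ) : ℤ) := by
      rw [← Int.abs_eq_natAbs]
      refine habs.trans ?_
      push_cast [Int.natCast_natAbs]
      linarith
    exact_mod_cast hcast
  · intro hbal a
    by_cases h : [a] ∈ Lang X
    · exact hbal [a] h
    · refine ⟨0, ?_⟩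
      intro w w' hw hw' _
      have hz : ∀ z ∈ Lang X, occ [a] z = 0 := by
        intro z hz
        by_contra h0
        exact h (mem_lang_of_infix (infix_of_occ_pos (Nat.pos_of_ne_zero h0)) hz)
      rw [hz w hw, hz w' hw']
      simp

end Balance
end
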